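/- Let f₁, f₂ be C² diffeomorphisms of an interval with ‖f_j − id‖_{C²} < ε for small ε, in particular 1−ε ≤ |f_j'| ≤ 1+ε. Then at every point where the commutator [f₁,f₂] = f₁∘f₂∘f₁⁻¹∘f₂⁻¹ is defined, |D²[f₁,f₂]| ≤ K(ε) · max{sup|D²f₁|, sup|D²f₂|} where K(ε) = 3·(1+ε)²/(1−ε)⁴ + (1+ε)²/(1−ε)⁵; in particular K(ε) ≤ 5 for ε small enough. -/

import Mathlib

private lemma cd_deriv {u : ℝ → ℝ} (hu : ContDiff ℝ 2 u) : ContDiff ℝ 1 (deriv u) := by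
  have h : ContDiff ℝ (1+1 : ℕ∞) u := by exact_mod_cast hu
  exact (contDiff_succ_iff_deriv.mp h).2.2

private lemma comp_deriv1 {u v : ℝ → ℝ} (hu : ContDiff ℝ 2 u) (hv : ContDiff ℝ 2 v) (x : ℝ) :
    deriv (u ∘ v) x = deriv u (v x) * deriv v x :=
  deriv_comp x (hu.differentiable two_ne_zero _) (hv.differentiable two_ne_zero _)

private lemma comp_deriv2 {u v : ℝ → ℝ} (hu : ContDiff ℝ 2 u) (hv : ContDiff ℝ 2 v) (x : ℝ) :
    deriv (deriv (u ∘ v)) x =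
      deriv (deriv u) (v x) * deriv v x * deriv v x + deriv u (v x) * deriv (deriv v) x := by
  have h1 : deriv (u ∘ v) = fun y => deriv u (v y) * deriv v y := funext fun y => comp_deriv1 hu hv y
  rw [h1]
  have hdu : Differentiable ℝ (deriv u) := (cd_deriv hu).differentiable one_ne_zero
  have hdv : Differentiable ℝ (deriv v) := (cd_deriv hv).differentiable one_ne_zero
  have hvd : Differentiable ℝ v := hv.differentiable two_ne_zero
  have h2 : DifferentiableAt ℝ (fun y => deriv u (v y)) x := (hdu (v x)).comp x (hvd x)
  have h3 : deriv (fun y => deriv u (v y)) x = deriv (deriv u) (v x) * deriv v x :=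
    deriv_comp x (hdu (v x)) (hvd x)
  rw [deriv_fun_mul h2 (hdv x), h3]

private lemma comp_bound {u v : ℝ → ℝ} (hu : ContDiff ℝ 2 u) (hv : ContDiff ℝ 2 v)
    {A₁ A₂ C₁ C₂ : ℝ} (hA₁ : ∀ x, |deriv u x| ≤ A₁) (hA₂ : ∀ x, |deriv (deriv u) x| ≤ A₂)
    (hC₁ : ∀ x, |deriv v x| ≤ C₁) (hC₂ : ∀ x, |deriv (deriv v) x| ≤ C₂) (x : ℝ) :
    |deriv (deriv (u ∘ v)) x| ≤ A₂ * C₁ ^ 2 + A₁ * C₂ := by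
  have hA₁0 : 0 ≤ A₁ := le_trans (abs_nonneg _) (hA₁ 0)
  have hA₂0 : 0 ≤ A₂ := le_trans (abs_nonneg _) (hA₂ 0)
  have hC₁0 : 0 ≤ C₁ := le_trans (abs_nonneg _) (hC₁ 0)
  rw [comp_deriv2 hu hv]
  calc |deriv (deriv u) (v x) * deriv v x * deriv v x + deriv u (v x) * deriv (deriv v) x|
      ≤ |deriv (deriv u) (v x)| * |deriv v x| * |deriv v x| + |deriv u (v x)| * |deriv (deriv v) x| := by
        rw [← abs_mul, ← abs_mul, ← abs_mul]; exact abs_add_le _ _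
    _ ≤ A₂ * C₁ * C₁ + A₁ * C₂ := by
        gcongr <;> [exact hA₂ _; exact hC₁ _; exact hC₁ _; exact hA₁ _; exact hC₂ _]
    _ = A₂ * C₁ ^ 2 + A₁ * C₂ := by ring

private lemma comp_bound1 {u v : ℝ → ℝ} (hu : ContDiff ℝ 2 u) (hv : ContDiff ℝ 2 v)
    {A₁ C₁ : ℝ} (hA₁ : ∀ x, |deriv u x| ≤ A₁) (hC₁ : ∀ x, |deriv v x| ≤ C₁) (x : ℝ) :
    |deriv (u ∘ v) x| ≤ A₁ * C₁ := by
  have hA₁0 : 0 ≤ A₁ := le_trans (abs_nonneg _) (hA₁ 0)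
  rw [comp_deriv1 hu hv, abs_mul]
  exact mul_le_mul (hA₁ _) (hC₁ _) (abs_nonneg _) hA₁0

/-- Derivative bounds for the inverse. -/
private lemma inv_derivs {f g : ℝ → ℝ} (hf : ContDiff ℝ 2 f) (hg : ContDiff ℝ 2 g)
    (hfg : Function.RightInverse g f)
    {ε B : ℝ} (hε0 : 0 < ε) (hε1 : ε < 1) (hB : 0 ≤ B)
    (hd : ∀ x, 1 - ε ≤ |deriv f x| ∧ |deriv f x| ≤ 1 + ε)
    (hBf : ∀ x, |deriv (deriv f) x| ≤ B) :
    (∀ x, |deriv g x| ≤ 1 / (1 - ε)) ∧ (∀ x, |deriv (deriv g) x| ≤ B / (1 - ε) ^ 3) := by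
  have hc : (0:ℝ) < 1 - ε := by linarith
  have hfd : Differentiable ℝ f := hf.differentiable two_ne_zero
  have hgd : Differentiable ℝ g := hg.differentiable two_ne_zero
  have hkey : ∀ x, deriv f (g x) * deriv g x = 1 := by
    intro x
    have h1 : f ∘ g = id := funext hfg
    have := deriv_comp x (hfd (g x)) (hgd x)
    rw [h1, deriv_id] at this
    exact this.symm
  have hne : ∀ x, deriv f (g x) ≠ 0 := by
    intro x
    have := (hd (g x)).1
    intro h0; rw [h0, abs_zero] at this; linarith
  have hginv : deriv g = fun x => (deriv f (g x))⁻¹ := by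
    funext x
    exact (inv_eq_of_mul_eq_one_right (hkey x)).symm
  have hgb : ∀ x, |deriv g x| ≤ 1 / (1 - ε) := by
    intro x
    rw [hginv]
    simp only [abs_inv, one_div]
    exact inv_anti₀ hc (hd (g x)).1
  refine ⟨hgb, fun x => ?_⟩
  have hdu : Differentiable ℝ (deriv f) := (cd_deriv hf).differentiable one_ne_zero
  have hux : DifferentiableAt ℝ (fun y => deriv f (g y)) x := (hdu (g x)).comp x (hgd x)
  have h2 : deriv (deriv g) x =
      -(deriv (deriv f) (g x) * deriv g x) / (deriv f (g x)) ^ 2 := by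
    conv_lhs => rw [hginv]
    rw [deriv_fun_inv'' hux (hne x)]
    have h3 : deriv (fun y => deriv f (g y)) x = deriv (deriv f) (g x) * deriv g x :=
      deriv_comp x (hdu (g x)) (hgd x)
    rw [h3]
  rw [h2, abs_div, abs_neg, abs_mul]
  have hden : (1 - ε) ^ 2 ≤ |deriv f (g x) ^ 2| := by
    rw [abs_pow]
    exact pow_le_pow_left₀ hc.le (hd (g x)).1 2
  calc |deriv (deriv f) (g x)| * |deriv g x| / |deriv f (g x) ^ 2|
      ≤ B * (1 / (1 - ε)) / (1 - ε) ^ 2 := by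
        apply div_le_div₀ (by positivity) _ (by positivity) hden
        exact mul_le_mul (hBf _) (hgb x) (abs_nonneg _) hB
    _ = B / (1 - ε) ^ 3 := by rw [mul_one_div, div_div, ← pow_succ']

/-- Second-derivative bound for the commutator `[f₁,f₂] = f₁ ∘ f₂ ∘ f₁⁻¹ ∘ f₂⁻¹` of two C²
diffeomorphisms that are `ε`-close to the identity in the C² topology (so in particular
`1−ε ≤ |f_j'| ≤ 1+ε`): at every point,
`|D²[f₁,f₂]| ≤ K(ε)·max{sup |D²f₁|, sup |D²f₂|}` with
`K(ε) = 3·(1+ε)²/(1−ε)⁴ + (1+ε)²/(1−ε)⁵`; moreover `K(ε) ≤ 5` for `ε` small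
(e.g. `ε ≤ 1/100`). -/
theorem second_deriv_commutator_bound
    (ε : ℝ) (hε0 : 0 < ε) (hε1 : ε < 1)
    (f₁ f₂ g₁ g₂ : ℝ → ℝ)
    (hf₁ : ContDiff ℝ 2 f₁) (hf₂ : ContDiff ℝ 2 f₂)
    (hg₁ : ContDiff ℝ 2 g₁) (hg₂ : ContDiff ℝ 2 g₂)
    (hinv₁ : Function.LeftInverse g₁ f₁ ∧ Function.RightInverse g₁ f₁)
    (hinv₂ : Function.LeftInverse g₂ f₂ ∧ Function.RightInverse g₂ f₂)
    (hd₁ : ∀ x : ℝ, 1 - ε ≤ |deriv f₁ x| ∧ |deriv f₁ x| ≤ 1 + ε)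
    (hd₂ : ∀ x : ℝ, 1 - ε ≤ |deriv f₂ x| ∧ |deriv f₂ x| ≤ 1 + ε)
    (B : ℝ) (hB : 0 ≤ B)
    (hB₁ : ∀ x : ℝ, |deriv (deriv f₁) x| ≤ B)
    (hB₂ : ∀ x : ℝ, |deriv (deriv f₂) x| ≤ B) :
    (∀ x : ℝ, |deriv (deriv (f₁ ∘ f₂ ∘ g₁ ∘ g₂)) x| ≤
        (3 * (1 + ε) ^ 2 / (1 - ε) ^ 4 + (1 + ε) ^ 2 / (1 - ε) ^ 5) * B) ∧
      (ε ≤ 1 / 100 →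
        3 * (1 + ε) ^ 2 / (1 - ε) ^ 4 + (1 + ε) ^ 2 / (1 - ε) ^ 5 ≤ 5) := by
  have hc : (0:ℝ) < 1 - ε := by linarith
  constructor
  · intro x
    -- bounds on inverses
    obtain ⟨hg₁1, hg₁2⟩ := inv_derivs hf₁ hg₁ hinv₁.2 hε0 hε1 hB hd₁ hB₁
    obtain ⟨hg₂1, hg₂2⟩ := inv_derivs hf₂ hg₂ hinv₂.2 hε0 hε1 hB hd₂ hB₂
    -- p = g₁ ∘ g₂
    have hp : ContDiff ℝ 2 (g₁ ∘ g₂) := hg₁.comp hg₂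
    have hp1 : ∀ y, |deriv (g₁ ∘ g₂) y| ≤ (1/(1-ε)) * (1/(1-ε)) :=
      fun y => comp_bound1 hg₁ hg₂ hg₁1 hg₂1 y
    have hp2 : ∀ y, |deriv (deriv (g₁ ∘ g₂)) y| ≤
        (B/(1-ε)^3) * (1/(1-ε)) ^ 2 + (1/(1-ε)) * (B/(1-ε)^3) :=
      fun y => comp_bound hg₁ hg₂ hg₁1 hg₁2 hg₂1 hg₂2 y
    -- q = f₂ ∘ p
    have hq : ContDiff ℝ 2 (f₂ ∘ g₁ ∘ g₂) := hf₂.comp hp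
    have hf₂1 : ∀ y, |deriv f₂ y| ≤ 1 + ε := fun y => (hd₂ y).2
    have hf₁1 : ∀ y, |deriv f₁ y| ≤ 1 + ε := fun y => (hd₁ y).2
    have hq1 : ∀ y, |deriv (f₂ ∘ g₁ ∘ g₂) y| ≤ (1+ε) * ((1/(1-ε)) * (1/(1-ε))) :=
      fun y => comp_bound1 hf₂ hp hf₂1 hp1 y
    have hq2 : ∀ y, |deriv (deriv (f₂ ∘ g₁ ∘ g₂)) y| ≤
        B * ((1/(1-ε)) * (1/(1-ε))) ^ 2 +
          (1+ε) * ((B/(1-ε)^3) * (1/(1-ε)) ^ 2 + (1/(1-ε)) * (B/(1-ε)^3)) :=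
      fun y => comp_bound hf₂ hp hf₂1 hB₂ hp1 hp2 y
    have hF : |deriv (deriv (f₁ ∘ f₂ ∘ g₁ ∘ g₂)) x| ≤
        B * ((1+ε) * ((1/(1-ε)) * (1/(1-ε)))) ^ 2 +
          (1+ε) * (B * ((1/(1-ε)) * (1/(1-ε))) ^ 2 +
            (1+ε) * ((B/(1-ε)^3) * (1/(1-ε)) ^ 2 + (1/(1-ε)) * (B/(1-ε)^3))) :=
      comp_bound hf₁ hq hf₁1 hB₁ hq1 hq2 x
    refine hF.trans ?_
    have key : B * ((1+ε) * ((1/(1-ε)) * (1/(1-ε)))) ^ 2 +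
          (1+ε) * (B * ((1/(1-ε)) * (1/(1-ε))) ^ 2 +
            (1+ε) * ((B/(1-ε)^3) * (1/(1-ε)) ^ 2 + (1/(1-ε)) * (B/(1-ε)^3)))
        = ((2 * (1+ε)^2 + (1+ε)) * (1-ε) + (1+ε)^2) * B / (1-ε)^5 := by
      field_simp; ring
    have key2 : (3 * (1 + ε) ^ 2 / (1 - ε) ^ 4 + (1 + ε) ^ 2 / (1 - ε) ^ 5) * B
        = (3 * (1+ε)^2 * (1-ε) + (1+ε)^2) * B / (1-ε)^5 := by
      field_simp
    rw [key, key2]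
    gcongr
    nlinarith [sq_nonneg ε]
  · intro hε
    have hK : 3 * (1 + ε) ^ 2 / (1 - ε) ^ 4 + (1 + ε) ^ 2 / (1 - ε) ^ 5
        = (3 * (1 + ε) ^ 2 * (1 - ε) + (1 + ε) ^ 2) / (1 - ε) ^ 5 := by
      field_simp
    rw [hK, div_le_iff₀ (by positivity)]
    nlinarith [pow_nonneg hε0.le 3, pow_nonneg hε0.le 4, pow_nonneg hε0.le 5,
      mul_nonneg (pow_nonneg hε0.le 3) (by linarith : (0:ℝ) ≤ 1 - ε),
      mul_nonneg (mul_nonneg hε0.le hε0.le) (by linarith : (0:ℝ) ≤ 1 - ε),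
      sq_nonneg ε, hε, hε0.le]
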